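/- arXiv:1205.4600 — 7 statements merged into one kernel-verified Lean document; each statement's English description precedes it below -/
import Mathlib

section
/- Let b > 1 be a non-square positive integer and let (m,n) and (m',n') be solutions in positive integers of the Pell equation x² − b·y² = 1 with m' sufficiently large. Then m < m·m' − b·n·n' < m'. -/
theorem pell_product_between
    (b m n : ℤ) (hb : 1 < b) (hbs : ¬ IsSquare b)
    (hm : 0 < m) (hn : 0 < n) (hPell : m ^ 2 - b * n ^ 2 = 1) :
    ∃ M : ℤ, ∀ m' n' : ℤ, 0 < m' → 0 < n' → m' ^ 2 - b * n' ^ 2 = 1 →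
      M ≤ m' → m < m * m' - b * n * n' ∧ m * m' - b * n * n' < m' := by
  refine ⟨2 * m ^ 2, ?_⟩
  intro m' n' hm' hn' hPell' hM
  have hm2 : 2 ≤ m := by nlinarith
  have hbnn : 1 ≤ b * n * n' := by nlinarith
  have hpos : 0 < m * m' + b * n * n' := by nlinarith
  have hid : (m * m' - b * n * n') * (m * m' + b * n * n') = m ^ 2 + m' ^ 2 - 1 := by
    linear_combination (b * n' ^ 2) * hPell + (m ^ 2 - 1) * hPell'
  have hC : 0 < m ^ 2 + m' ^ 2 - 1 := by nlinarith
  have hX : 0 < m * m' - b * n * n' := by nlinarith [hid, hpos, hC]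
  have hle : b * n * n' ≤ m * m' - 1 := by omega
  constructor
  · have h1 : m * (m * m' + b * n * n') < (m * m' - b * n * n') * (m * m' + b * n * n') := by
      rw [hid]
      nlinarith [mul_nonneg (by linarith : (0:ℤ) ≤ m' - 2 * m ^ 2) hm'.le,
        mul_le_mul_of_nonneg_left hle hm.le]
    exact lt_of_mul_lt_mul_right h1 hpos.le
  · have h2 : (m * m' - b * n * n') * (m * m' + b * n * n') < m' * (m * m' + b * n * n') := by
      rw [hid]
      nlinarith [mul_nonneg (by linarith : (0:ℤ) ≤ m' - 2 * m ^ 2) hm'.le,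
        mul_le_mul_of_nonneg_left hbnn hm'.le]
    exact lt_of_mul_lt_mul_right h2 hpos.le
end

section
/- With the setup of the recursive sequence y_{i+1} = Φ(y_i,y_{i−2})·y_i − y_{i−2} (valid since φ(y_i)=1), the determinants alternate: det(y_i, y_{i−1}, y_{i−2}) = (−1)^{i−1}·det(y₁, y₀, y₋₁) for all i ≥ 1. -/
lemma det_step (c : ℚ) (A B C : Fin 3 → ℚ) :
    Matrix.det (Matrix.of ![c • A - B, A, C]) = - Matrix.det (Matrix.of ![A, C, B]) := by
  simp [Matrix.det_fin_three, Pi.sub_apply, Pi.smul_apply, smul_eq_mul]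
  ring

theorem recursive_sequence_det_alternates
    (Φ : (Fin 3 → ℚ) →ₗ[ℚ] (Fin 3 → ℚ) →ₗ[ℚ] ℚ)
    (hsymm : ∀ u v, Φ u v = Φ v u)
    (φ : (Fin 3 → ℚ) → ℚ) (hφ : ∀ u, Φ u u = 2 * φ u)
    (y : ℕ → Fin 3 → ℚ)
    (hone : ∀ i, φ (y i) = 1)
    (hrec : ∀ i, y (i + 3) = Φ (y (i + 2)) (y i) • y (i + 2) - y i) :
    ∀ i, Matrix.det (Matrix.of ![y (i + 2), y (i + 1), y i])
      = (-1 : ℚ) ^ i * Matrix.det (Matrix.of ![y 2, y 1, y 0]) := by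
  intro i
  induction i with
  | zero => simp
  | succ n ih =>
      have h : Matrix.det (Matrix.of ![y (n + 3), y (n + 2), y (n + 1)])
          = - Matrix.det (Matrix.of ![y (n + 2), y (n + 1), y n]) := by
        rw [hrec n, det_step]
      show Matrix.det (Matrix.of ![y (n + 3), y (n + 2), y (n + 1)]) = _
      rw [h, ih, pow_succ]
      ring
end

section
/- With the recursive sequence y_{i+1} = Φ(y_i,y_{i−2})·y_i − y_{i−2} where φ(y_i) = 1 for all i, setting t_i = Φ(y_{i+1}, y_i), one has t_i = Φ(y_i, y_{i−2}) for all i ≥ 1, and consequently t_{i+1} = t_i·t_{i−1} − t_{i−2} for all i ≥ 1. -/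
theorem recursive_sequence_t_recurrence
    (Φ : (Fin 3 → ℚ) →ₗ[ℚ] (Fin 3 → ℚ) →ₗ[ℚ] ℚ)
    (hsymm : ∀ u v, Φ u v = Φ v u)
    (φ : (Fin 3 → ℚ) → ℚ) (hφ : ∀ u, Φ u u = 2 * φ u)
    (y : ℕ → Fin 3 → ℚ)
    (hone : ∀ i, φ (y i) = 1)
    (hrec : ∀ i, y (i + 3) = Φ (y (i + 2)) (y i) • y (i + 2) - y i)
    (t : ℕ → ℚ) (ht : ∀ i, t i = Φ (y (i + 1)) (y i)) :
    (∀ i, t (i + 2) = Φ (y (i + 2)) (y i)) ∧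
    (∀ i, t (i + 3) = t (i + 2) * t (i + 1) - t i) := by
  have hnorm : ∀ i, Φ (y i) (y i) = 2 := by
    intro i; rw [hφ, hone]; ring
  have key : ∀ i, t (i + 2) = Φ (y (i + 2)) (y i) := by
    intro i
    have h3 : (i + 2) + 1 = i + 3 := by ring
    rw [ht, h3, hrec i, map_sub, map_smul, LinearMap.sub_apply, LinearMap.smul_apply,
      hnorm, hsymm (y i) (y (i + 2))]
    simp; ring
  refine ⟨key, fun i => ?_⟩
  have h1 : t (i + 3) = Φ (y (i + 3)) (y (i + 1)) := by
    have := key (i + 1)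
    simpa [show i + 1 + 2 = i + 3 from by ring] using this
  rw [h1, hrec i, map_sub, map_smul, LinearMap.sub_apply, LinearMap.smul_apply,
    ← key i, ← ht (i + 1), hsymm (y i) (y (i + 1)), ← ht i]
  simp [mul_comm]
end

section
/- Let (t_i)_{i ≥ −1} be a sequence of integers with 1 ≤ t₋₁ < t₀ < t₁ and satisfying the recurrence t_{i+1} = t_i·t_{i−1} − t_{i−2} for i ≥ 1. Then (t_i) is strictly increasing, and for all i ≥ 1: (t_i − 1)·t_{i−1} < t_{i+1} < t_i·t_{i−1}. -/
theorem t_sequence_strict_growth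
    (t : ℕ → ℤ)
    (h0 : 1 ≤ t 0) (h01 : t 0 < t 1) (h12 : t 1 < t 2)
    (hrec : ∀ i, t (i + 3) = t (i + 2) * t (i + 1) - t i) :
    StrictMono t ∧
    ∀ i, (t (i + 2) - 1) * t (i + 1) < t (i + 3) ∧ t (i + 3) < t (i + 2) * t (i + 1) := by
  have key : ∀ i, 1 ≤ t i ∧ t i < t (i + 1) ∧ t (i + 1) < t (i + 2) := by
    intro i
    induction i with
    | zero => exact ⟨h0, h01, h12⟩
    | succ n ih =>
      obtain ⟨h1, h2, h3⟩ := ih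
      refine ⟨by linarith, h3, ?_⟩
      have hr := hrec n
      nlinarith
  constructor
  · exact strictMono_nat_of_lt_succ (fun n => (key n).2.1)
  · intro i
    obtain ⟨h1, h2, h3⟩ := key i
    have hr := hrec i
    constructor
    · nlinarith
    · nlinarith
end

section
/- Let (t_i) be an increasing sequence of integers ≥ 2 satisfying (t_i − 1)·t_{i−1} < t_{i+1} < t_i·t_{i−1} for all i ≥ 1. Then there exist constants 0 < c₁ ≤ c₂ such that c₁·t_i^γ ≤ t_{i+1} ≤ c₂·t_i^γ for all i, where γ = (1+√5)/2. -/
theorem t_sequence_golden_growth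
    (t : ℕ → ℤ)
    (hmono : StrictMono t) (h2 : 2 ≤ t 0)
    (hrec : ∀ i, (t (i + 2) - 1) * t (i + 1) < t (i + 3) ∧ t (i + 3) < t (i + 2) * t (i + 1)) :
    ∃ c₁ c₂ : ℝ, 0 < c₁ ∧ c₁ ≤ c₂ ∧
      ∀ i, c₁ * (t i : ℝ) ^ ((1 + Real.sqrt 5) / 2) ≤ (t (i + 1) : ℝ) ∧
        (t (i + 1) : ℝ) ≤ c₂ * (t i : ℝ) ^ ((1 + Real.sqrt 5) / 2) := by
  set γ : ℝ := (1 + Real.sqrt 5) / 2 with hγdef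
  have hs5 : Real.sqrt 5 ^ 2 = 5 := Real.sq_sqrt (by norm_num)
  have hs5lb : (2:ℝ) < Real.sqrt 5 := by nlinarith [Real.sqrt_nonneg 5]
  have hs5ub : Real.sqrt 5 < 3 := by nlinarith [Real.sqrt_nonneg 5]
  have hγ1 : 1 < γ := by rw [hγdef]; nlinarith
  have hγ2 : γ < 2 := by rw [hγdef]; nlinarith
  have hγq : (γ - 1) * γ = 1 := by rw [hγdef]; nlinarith
  have ht2 : ∀ i, (2:ℤ) ≤ t i := fun i => le_trans h2 (hmono.monotone (Nat.zero_le i))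
  have hT2 : ∀ i, (2:ℝ) ≤ (t i : ℝ) := fun i => by exact_mod_cast ht2 i
  have hTpos : ∀ i, (0:ℝ) < (t i : ℝ) := fun i => lt_of_lt_of_le two_pos (hT2 i)
  set x : ℕ → ℝ := fun i => Real.log (t i) with hxdef
  have hlog2 : (0:ℝ) ≤ Real.log 2 := Real.log_nonneg one_le_two
  have hδ : ∀ i, |x (i+3) - x (i+2) - x (i+1)| ≤ Real.log 2 := by
    intro i
    obtain ⟨hlo, hhi⟩ := hrec i
    have hhiR : (t (i+3) : ℝ) ≤ (t (i+2) : ℝ) * (t (i+1) : ℝ) := by exact_mod_cast hhi.le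
    have hloR : (t (i+2) : ℝ) * (t (i+1) : ℝ) / 2 ≤ (t (i+3) : ℝ) := by
      have h1 : ((t (i+2) : ℝ) - 1) * (t (i+1) : ℝ) ≤ (t (i+3) : ℝ) := by
        exact_mod_cast hlo.le
      nlinarith [hT2 (i+2), hTpos (i+1)]
    have hub : x (i+3) ≤ x (i+2) + x (i+1) := by
      simp only [hxdef]
      calc Real.log (t (i+3)) ≤ Real.log ((t (i+2):ℝ) * (t (i+1):ℝ)) :=
            Real.log_le_log (hTpos (i+3)) hhiR
        _ = _ := Real.log_mul (ne_of_gt (hTpos (i+2))) (ne_of_gt (hTpos (i+1)))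
    have hlb : x (i+2) + x (i+1) - Real.log 2 ≤ x (i+3) := by
      simp only [hxdef]
      have hmulpos : (0:ℝ) < (t (i+2):ℝ) * (t (i+1):ℝ) :=
        mul_pos (hTpos (i+2)) (hTpos (i+1))
      have h3 : Real.log ((t (i+2):ℝ) * (t (i+1):ℝ) / 2) ≤ Real.log (t (i+3)) :=
        Real.log_le_log (by linarith) hloR
      rw [Real.log_div (ne_of_gt hmulpos) (by norm_num),
        Real.log_mul (ne_of_gt (hTpos (i+2))) (ne_of_gt (hTpos (i+1)))] at h3
      linarith
    rw [abs_le]; constructor <;> linarith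
  set e : ℕ → ℝ := fun i => x (i+1) - γ * x i with hedef
  have hstep : ∀ i, |e (i+2)| ≤ (γ-1) * |e (i+1)| + Real.log 2 := by
    intro i
    have key : e (i+2) = (1-γ) * e (i+1) + (x (i+3) - x (i+2) - x (i+1)) := by
      simp only [hedef]
      linear_combination (-(x (i+1))) * hγq
    calc |e (i+2)| ≤ |(1-γ) * e (i+1)| + |x (i+3) - x (i+2) - x (i+1)| := by
          rw [key]; exact abs_add_le _ _
      _ ≤ (γ-1) * |e (i+1)| + Real.log 2 := by
          rw [abs_mul, abs_of_nonpos (by linarith : (1:ℝ) - γ ≤ 0)]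
          have h1 := hδ i
          nlinarith [abs_nonneg (e (i+1))]
  set B : ℝ := max (|e 1|) (Real.log 2 / (2 - γ)) with hBdef
  have h2γ : (0:ℝ) < 2 - γ := by linarith
  have hlogB : Real.log 2 ≤ (2 - γ) * B := by
    have : Real.log 2 / (2 - γ) ≤ B := le_max_right _ _
    calc Real.log 2 = (2-γ) * (Real.log 2 / (2-γ)) := by field_simp
      _ ≤ (2-γ) * B := by nlinarith
  have hBrec : ∀ n, |e (n+1)| ≤ B := by
    intro n
    induction n with
    | zero => exact le_max_left _ _
    | succ m ih =>
        calc |e (m+2)| ≤ (γ-1) * |e (m+1)| + Real.log 2 := hstep m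
          _ ≤ (γ-1) * B + Real.log 2 := by nlinarith
          _ ≤ B := by linarith
  set M : ℝ := max B (|e 0|) with hMdef
  have hM : ∀ i, |e i| ≤ M := by
    intro i
    cases i with
    | zero => exact le_max_right _ _
    | succ n => exact (hBrec n).trans (le_max_left _ _)
  have hMnn : 0 ≤ M := le_trans (abs_nonneg _) (hM 0)
  refine ⟨Real.exp (-M), Real.exp M, Real.exp_pos _, Real.exp_le_exp.2 (by linarith), ?_⟩
  intro i
  have hrpow : (t i : ℝ) ^ γ = Real.exp (x i * γ) := by
    rw [Real.rpow_def_of_pos (hTpos i)]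
  have hexp : (t (i+1) : ℝ) = Real.exp (x (i+1)) := (Real.exp_log (hTpos (i+1))).symm
  have hei := hM i
  rw [abs_le] at hei
  constructor
  · rw [hrpow, hexp, ← Real.exp_add, Real.exp_le_exp]
    simp only [hedef] at hei
    linarith [hei.1]
  · rw [hrpow, hexp, ← Real.exp_add, Real.exp_le_exp]
    simp only [hedef] at hei
    linarith [hei.2]
end

section
/- The projective distance dist([x],[y]) = ‖x ∧ y‖/(‖x‖·‖y‖) on ℙ²(ℝ) satisfies the quasi-triangle inequality dist([x],[z]) ≤ dist([x],[y]) + 2·dist([y],[z]) for all nonzero x, y, z ∈ ℝ³. -/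
set_option linter.unnecessarySimpa false in
lemma cross_comp_le (y z : Fin 3 → ℝ) (i : Fin 3) :
    ∀ k, |z k * y i - z i * y k| ≤ ‖crossProduct y z‖ := by
  have hn : ∀ j, |crossProduct y z j| ≤ ‖crossProduct y z‖ := fun j => by
    simpa using norm_le_pi_norm (crossProduct y z) j
  have hn0 : |y 1 * z 2 - y 2 * z 1| ≤ ‖crossProduct y z‖ := hn 0
  have hn1 : |y 2 * z 0 - y 0 * z 2| ≤ ‖crossProduct y z‖ := hn 1
  have hn2 : |y 0 * z 1 - y 1 * z 0| ≤ ‖crossProduct y z‖ := hn 2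
  intro k
  fin_cases i <;> fin_cases k <;> simp only [Fin.zero_eta, Fin.mk_one, Fin.reduceFinMk]
  · simpa using norm_nonneg (crossProduct y z)
  · exact le_trans (le_of_eq (by congr 1; ring)) hn2
  · exact le_trans (le_of_eq (by rw [abs_sub_comm]; congr 1; ring)) hn1
  · exact le_trans (le_of_eq (by rw [abs_sub_comm]; congr 1; ring)) hn2
  · simpa using norm_nonneg (crossProduct y z)
  · exact le_trans (le_of_eq (by congr 1; ring)) hn0
  · exact le_trans (le_of_eq (by congr 1; ring)) hn1
  · exact le_trans (le_of_eq (by rw [abs_sub_comm]; congr 1; ring)) hn0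
  · simpa using norm_nonneg (crossProduct y z)

lemma cross_norm_le' (a b : Fin 3 → ℝ) : ‖crossProduct a b‖ ≤ 2 * ‖a‖ * ‖b‖ := by
  have ha : ∀ i, |a i| ≤ ‖a‖ := fun i => by simpa using norm_le_pi_norm a i
  have hb : ∀ i, |b i| ≤ ‖b‖ := fun i => by simpa using norm_le_pi_norm b i
  have h : ∀ (i j k l : Fin 3), |a i * b j - a k * b l| ≤ 2 * ‖a‖ * ‖b‖ := by
    intro i j k l
    have h1 : |a i * b j - a k * b l| ≤ |a i| * |b j| + |a k| * |b l| := by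
      calc |a i * b j - a k * b l| ≤ |a i * b j| + |a k * b l| := abs_sub _ _
        _ = |a i| * |b j| + |a k| * |b l| := by rw [abs_mul, abs_mul]
    refine h1.trans ?_
    nlinarith [ha i, ha k, hb j, hb l, abs_nonneg (a i), abs_nonneg (a k),
      abs_nonneg (b j), abs_nonneg (b l), (abs_nonneg (a 0)).trans (ha 0),
      (abs_nonneg (b 0)).trans (hb 0)]
  refine (pi_norm_le_iff_of_nonneg (by positivity)).mpr fun j => ?_
  fin_cases j <;> simpa [crossProduct, Real.norm_eq_abs] using h _ _ _ _

theorem projective_distance_quasi_triangle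
    (x y z : Fin 3 → ℝ) (hx : x ≠ 0) (hy : y ≠ 0) (hz : z ≠ 0) :
    ‖crossProduct x z‖ / (‖x‖ * ‖z‖) ≤
      ‖crossProduct x y‖ / (‖x‖ * ‖y‖) + 2 * (‖crossProduct y z‖ / (‖y‖ * ‖z‖)) := by
  have hx' : (0:ℝ) < ‖x‖ := norm_pos_iff.mpr hx
  have hy' : (0:ℝ) < ‖y‖ := norm_pos_iff.mpr hy
  have hz' : (0:ℝ) < ‖z‖ := norm_pos_iff.mpr hz
  obtain ⟨i, -, hi⟩ := Finset.exists_mem_eq_sup (Finset.univ : Finset (Fin 3))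
    ⟨0, Finset.mem_univ 0⟩ (fun i => ‖y i‖₊)
  have hyi : ‖y‖ = |y i| := by rw [Pi.norm_def, hi]; rfl
  have hyi0 : y i ≠ 0 := by
    intro h; rw [h, abs_zero] at hyi; exact hy'.ne' hyi
  set s : ℝ := z i / y i with hs
  set f : Fin 3 → ℝ := z - s • y with hfdef
  have hzeq : z = s • y + f := by rw [hfdef]; abel
  -- bound on ‖f‖
  have hfk : ∀ k, ‖f k‖ ≤ ‖crossProduct y z‖ / ‖y‖ := by
    intro k
    have : f k = (z k * y i - z i * y k) / y i := by
      rw [hfdef, hs]; simp only [Pi.sub_apply, Pi.smul_apply, smul_eq_mul]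
      field_simp
    rw [Real.norm_eq_abs, this, abs_div, hyi]
    exact (div_le_div_iff_of_pos_right (hyi ▸ hy')).mpr (cross_comp_le y z i k)
  have hfb : ‖f‖ ≤ ‖crossProduct y z‖ / ‖y‖ :=
    (pi_norm_le_iff_of_nonneg (by positivity)).mpr hfk
  have hco : crossProduct x z = s • crossProduct x y + crossProduct x f := by
    conv_lhs => rw [hzeq]
    simp
  have hsb : |s| ≤ ‖z‖ / ‖y‖ := by
    rw [hs, abs_div, ← hyi]
    exact (div_le_div_iff_of_pos_right hy').mpr (by simpa using norm_le_pi_norm z i)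
  have h1 : ‖crossProduct x z‖ ≤ |s| * ‖crossProduct x y‖ + 2 * ‖x‖ * ‖f‖ := by
    rw [hco]
    refine (norm_add_le _ _).trans (add_le_add ?_ (cross_norm_le' x f))
    rw [norm_smul, Real.norm_eq_abs]
  have key : ‖crossProduct x z‖ ≤
      ‖z‖ / ‖y‖ * ‖crossProduct x y‖ + 2 * ‖x‖ * (‖crossProduct y z‖ / ‖y‖) :=
    h1.trans (add_le_add (mul_le_mul_of_nonneg_right hsb (norm_nonneg _))
      (mul_le_mul_of_nonneg_left hfb (by positivity)))
  rw [div_le_iff₀ (by positivity)]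
  refine key.trans (le_of_eq ?_)
  field_simp
end

section
/- Let x, y, z ∈ ℤ³ each with first coordinates bounded by X in absolute value, and suppose L(x), L(y), L(z) ≤ L where L(w) = max(|w₀ξ₁ − w₁|, |w₀ξ₂ − w₂|) for fixed reals ξ₁, ξ₂ and w = (w₀,w₁,w₂). If z's first coordinate satisfies |z₀| ≤ X and x, y have L(x) ≤ L₁, L(y) ≤ L₂, then |det(x, y, z)| ≤ 6·X·L₁·L₂. (Determinant bound of Davenport–Schmidt.) -/
set_option maxHeartbeats 1000000


theorem davenport_schmidt_det_bound
    (ξ₁ ξ₂ : ℝ) (x y z : Fin 3 → ℤ) (X L₁ L₂ : ℝ)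
    (hx0 : |(x 0 : ℝ)| ≤ X) (hy0 : |(y 0 : ℝ)| ≤ X) (hz0 : |(z 0 : ℝ)| ≤ X)
    (hLx : max |(x 0 : ℝ) * ξ₁ - (x 1 : ℝ)| |(x 0 : ℝ) * ξ₂ - (x 2 : ℝ)| ≤ L₁)
    (hL1 : L₁ ≤ 1)
    (hLy : max |(y 0 : ℝ) * ξ₁ - (y 1 : ℝ)| |(y 0 : ℝ) * ξ₂ - (y 2 : ℝ)| ≤ L₂)
    (hL2 : L₂ ≤ 1)
    (hLz : max |(z 0 : ℝ) * ξ₁ - (z 1 : ℝ)| |(z 0 : ℝ) * ξ₂ - (z 2 : ℝ)| ≤ L₂)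
    (hL21 : L₂ ≤ L₁) :
    |Matrix.det (Matrix.of
        ![(fun k => (x k : ℝ)), (fun k => (y k : ℝ)), (fun k => (z k : ℝ))])|
      ≤ 6 * X * L₁ * L₂ := by
  set Ex := (x 0 : ℝ) * ξ₁ - (x 1 : ℝ) with hEx
  set Fx := (x 0 : ℝ) * ξ₂ - (x 2 : ℝ) with hFx
  set Ey := (y 0 : ℝ) * ξ₁ - (y 1 : ℝ) with hEy
  set Fy := (y 0 : ℝ) * ξ₂ - (y 2 : ℝ) with hFy
  set Ez := (z 0 : ℝ) * ξ₁ - (z 1 : ℝ) with hEz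
  set Fz := (z 0 : ℝ) * ξ₂ - (z 2 : ℝ) with hFz
  have hEx1 : |Ex| ≤ L₁ := le_trans (le_max_left _ _) hLx
  have hFx1 : |Fx| ≤ L₁ := le_trans (le_max_right _ _) hLx
  have hEy2 : |Ey| ≤ L₂ := le_trans (le_max_left _ _) hLy
  have hFy2 : |Fy| ≤ L₂ := le_trans (le_max_right _ _) hLy
  have hEz2 : |Ez| ≤ L₂ := le_trans (le_max_left _ _) hLz
  have hFz2 : |Fz| ≤ L₂ := le_trans (le_max_right _ _) hLz
  have hX : 0 ≤ X := le_trans (abs_nonneg _) hx0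
  have hL1n : 0 ≤ L₁ := le_trans (abs_nonneg _) hEx1
  have hL2n : 0 ≤ L₂ := le_trans (abs_nonneg _) hEy2
  have key : Matrix.det (Matrix.of
        ![(fun k => (x k : ℝ)), (fun k => (y k : ℝ)), (fun k => (z k : ℝ))])
      = (x 0 : ℝ) * (Ey * Fz - Fy * Ez) - (y 0 : ℝ) * (Ex * Fz - Fx * Ez)
        + (z 0 : ℝ) * (Ex * Fy - Fx * Ey) := by
    rw [Matrix.det_fin_three]
    simp [hEx, hFx, hEy, hFy, hEz, hFz]
    ring
  rw [key]
  have tri : |(x 0 : ℝ) * (Ey * Fz - Fy * Ez) - (y 0 : ℝ) * (Ex * Fz - Fx * Ez)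
        + (z 0 : ℝ) * (Ex * Fy - Fx * Ey)|
      ≤ |(x 0 : ℝ)| * (|Ey| * |Fz| + |Fy| * |Ez|)
        + |(y 0 : ℝ)| * (|Ex| * |Fz| + |Fx| * |Ez|)
        + |(z 0 : ℝ)| * (|Ex| * |Fy| + |Fx| * |Ey|) := by
    calc |(x 0 : ℝ) * (Ey * Fz - Fy * Ez) - (y 0 : ℝ) * (Ex * Fz - Fx * Ez)
        + (z 0 : ℝ) * (Ex * Fy - Fx * Ey)|
        ≤ |(x 0 : ℝ) * (Ey * Fz - Fy * Ez)| + |(y 0 : ℝ) * (Ex * Fz - Fx * Ez)|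
          + |(z 0 : ℝ) * (Ex * Fy - Fx * Ey)| := by
          refine le_trans (abs_add_le _ _) ?_
          gcongr
          exact abs_sub _ _
      _ ≤ _ := by
          rw [abs_mul, abs_mul, abs_mul]
          gcongr <;>
            exact le_trans (abs_sub _ _) (by rw [abs_mul, abs_mul])
  refine le_trans tri ?_
  have hax := abs_nonneg ((x 0 : ℝ)); have hay := abs_nonneg ((y 0 : ℝ))
  have haz := abs_nonneg ((z 0 : ℝ))
  have step : |(x 0 : ℝ)| * (|Ey| * |Fz| + |Fy| * |Ez|)
        + |(y 0 : ℝ)| * (|Ex| * |Fz| + |Fx| * |Ez|)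
        + |(z 0 : ℝ)| * (|Ex| * |Fy| + |Fx| * |Ey|)
      ≤ X * (L₂ * L₂ + L₂ * L₂) + X * (L₁ * L₂ + L₁ * L₂)
        + X * (L₁ * L₂ + L₁ * L₂) := by
    gcongr <;> first | exact abs_nonneg _ | assumption
  refine le_trans step ?_
  nlinarith [mul_le_mul_of_nonneg_left (mul_le_mul_of_nonneg_right hL21 hL2n) hX]
end
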